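/- Let A, B ∈ ℂ^{m×n}, Δ = A⊗B − B⊗A, and Δ₂₁ = U^m Δ (V^n)ᵀ where V^n and U^m are the symmetric and skew-symmetric compression blocks. Then Δ has full column rank if and only if Δ₂₁ has full column rank. Moreover, if the null space of Δ₂₁ is nonzero, it contains a vector of the form V^n(x⊗x) for some nonzero x ∈ ℂⁿ. -/

import Mathlib

open Matrix Kronecker

/-- The commutation matrix `K^n` (over ℂ). -/
def commMat (n : ℕ) : Matrix (Fin n × Fin n) (Fin n × Fin n) ℂ :=
  fun p q => if q = (p.2, p.1) then 1 else 0

/-- The symmetric projection `H^n = (1/2)(I + K^n)`. -/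
noncomputable def symProj (n : ℕ) : Matrix (Fin n × Fin n) (Fin n × Fin n) ℂ :=
  (2 : ℂ)⁻¹ • (1 + commMat n)

/-- The skew-symmetric projection `F^n = (1/2)(I − K^n)`. -/
noncomputable def skewProj (n : ℕ) : Matrix (Fin n × Fin n) (Fin n × Fin n) ℂ :=
  (2 : ℂ)⁻¹ • (1 - commMat n)

/-- Index set for strictly lower triangular positions (cardinality `n(n-1)/2`). -/
def LowIdx (n : ℕ) := {p : Fin n × Fin n // p.1 < p.2}

instance (n : ℕ) : Fintype (LowIdx n) := by unfold LowIdx; infer_instance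
instance (n : ℕ) : DecidableEq (LowIdx n) := by unfold LowIdx; infer_instance

/-- The diagonal selection matrix `S_D^n`. -/
def selD (n : ℕ) : Matrix (Fin n) (Fin n × Fin n) ℂ :=
  fun i q => if q = (i, i) then 1 else 0

/-- The strictly-lower-triangular selection matrix `S_L^n`. -/
def selL (n : ℕ) : Matrix (LowIdx n) (Fin n × Fin n) ℂ :=
  fun k q => if q = k.val then 1 else 0

/-- The strictly-upper-triangular selection matrix `S_U^n`. -/
def selU (n : ℕ) : Matrix (LowIdx n) (Fin n × Fin n) ℂ :=
  fun k q => if q = (k.val.2, k.val.1) then 1 else 0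

/-- The symmetric compression block `V^n = [S_D; √2 S_L] H^n`,
with `n(n+1)/2` rows. -/
noncomputable def Vblock (n : ℕ) :
    Matrix (Fin n ⊕ LowIdx n) (Fin n × Fin n) ℂ :=
  fromRows (selD n) ((Real.sqrt 2 : ℂ) • selL n) * symProj n

/-- The skew-symmetric compression block `U^m = −√2 S_U^m F^m`,
with `m(m-1)/2` rows. -/
noncomputable def Ublock (m : ℕ) :
    Matrix (LowIdx m) (Fin m × Fin m) ℂ :=
  (-(Real.sqrt 2 : ℂ)) • (selU m * skewProj m)


/-- Kronecker product of two vectors. -/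
def kronVec {n : ℕ} (x y : Fin n → ℂ) : Fin n × Fin n → ℂ := fun p => x p.1 * y p.2

lemma sqrt2_mul_self : (Real.sqrt 2 : ℂ) * (Real.sqrt 2 : ℂ) = 2 := by
  rw [← Complex.ofReal_mul, Real.mul_self_sqrt (by norm_num)]
  norm_num

lemma commMat_transpose (n : ℕ) : (commMat n)ᵀ = commMat n := by
  ext p q
  show (if p = (q.2, q.1) then (1:ℂ) else 0) = (if q = (p.2, p.1) then 1 else 0)
  exact if_congr ⟨fun h => by subst h; simp, fun h => by subst h; simp⟩ rfl rfl

lemma commMat_mulVec {n : ℕ} (v : Fin n × Fin n → ℂ) :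
    (commMat n).mulVec v = fun p => v (p.2, p.1) := by
  funext p
  simp [Matrix.mulVec, dotProduct, commMat]

lemma symProj_apply {n : ℕ} (p q : Fin n × Fin n) :
    symProj n p q = (2:ℂ)⁻¹ * ((if p = q then 1 else 0) + (if q = (p.2, p.1) then 1 else 0)) := by
  simp [symProj, commMat, Matrix.one_apply]

lemma skewProj_apply {n : ℕ} (p q : Fin n × Fin n) :
    skewProj n p q = (2:ℂ)⁻¹ * ((if p = q then 1 else 0) - (if q = (p.2, p.1) then 1 else 0)) := by
  simp [skewProj, commMat, Matrix.one_apply]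

lemma symProj_transpose (n : ℕ) : (symProj n)ᵀ = symProj n := by
  unfold symProj
  rw [Matrix.transpose_smul, Matrix.transpose_add, Matrix.transpose_one, commMat_transpose]

lemma commMat_mul_self (n : ℕ) : commMat n * commMat n = 1 := by
  ext p q
  simp only [Matrix.mul_apply, commMat, Matrix.one_apply, ite_mul, one_mul, zero_mul]
  rw [Finset.sum_ite_eq' Finset.univ ((p.2, p.1) : Fin n × Fin n)]
  simp [Prod.ext_iff, eq_comm, and_comm]

lemma symProj_idem (n : ℕ) : symProj n * symProj n = symProj n := by
  unfold symProj
  simp only [Matrix.smul_mul, Matrix.mul_smul, smul_smul, Matrix.add_mul, Matrix.mul_add,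
    Matrix.one_mul, Matrix.mul_one, commMat_mul_self]
  ext p q
  simp only [Matrix.smul_apply, Matrix.add_apply, Matrix.one_apply, smul_eq_mul]
  split <;> ring

lemma skewProj_idem (n : ℕ) : skewProj n * skewProj n = skewProj n := by
  unfold skewProj
  simp only [Matrix.smul_mul, Matrix.mul_smul, smul_smul, Matrix.sub_mul, Matrix.mul_sub,
    Matrix.one_mul, Matrix.mul_one, commMat_mul_self]
  ext p q
  simp only [Matrix.smul_apply, Matrix.sub_apply, Matrix.one_apply, smul_eq_mul]
  split <;> ring

lemma Vblock_apply_inl {n : ℕ} (i : Fin n) (p : Fin n × Fin n) :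
    Vblock n (Sum.inl i) p = symProj n (i, i) p := by
  unfold Vblock
  rw [Matrix.mul_apply]
  simp only [Matrix.fromRows_apply_inl, selD, ite_mul, one_mul, zero_mul]
  rw [Finset.sum_ite_eq' Finset.univ ((i, i) : Fin n × Fin n)]
  simp

lemma Vblock_apply_inr {n : ℕ} (k : LowIdx n) (p : Fin n × Fin n) :
    Vblock n (Sum.inr k) p = (Real.sqrt 2 : ℂ) * symProj n k.val p := by
  unfold Vblock
  rw [Matrix.mul_apply]
  simp only [Matrix.fromRows_apply_inr, Matrix.smul_apply, selL, smul_eq_mul, mul_ite, mul_one,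
    mul_zero, ite_mul, zero_mul]
  rw [Finset.sum_ite_eq' Finset.univ (k.val : Fin n × Fin n)]
  simp

lemma symProj_diag_apply {n : ℕ} (i : Fin n) (p : Fin n × Fin n) :
    symProj n (i, i) p = if p = (i, i) then 1 else 0 := by
  rw [symProj_apply]
  by_cases h : p = (i, i)
  · simp [h]; norm_num
  · have h2 : ¬((i, i) : Fin n × Fin n) = p := fun hh => h hh.symm
    simp [h, h2]

lemma lowIdx_val_ne_diag {n : ℕ} (k : LowIdx n) (i : Fin n) : k.val ≠ (i, i) := by
  intro h
  have := k.property
  rw [h] at this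
  exact lt_irrefl _ this

lemma lowIdx_swap_ne {n : ℕ} (k : LowIdx n) (p : Fin n × Fin n) (hp : p.1 < p.2) :
    p ≠ (k.val.2, k.val.1) := by
  intro h
  have hk := k.property
  rw [h] at hp
  exact absurd (hp.trans hk) (lt_irrefl _)

lemma mul_ST_inl {n : ℕ} {α : Type*} [Fintype α]
    (M : Matrix α (Fin n × Fin n) ℂ) (r : α) (j : Fin n) :
    (M * (Matrix.fromRows (selD n) ((Real.sqrt 2 : ℂ) • selL n))ᵀ) r (Sum.inl j) = M r (j, j) := by
  rw [Matrix.mul_apply]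
  simp only [Matrix.transpose_apply, Matrix.fromRows_apply_inl, selD, mul_ite, mul_one, mul_zero]
  rw [Finset.sum_ite_eq' Finset.univ ((j, j) : Fin n × Fin n)]
  simp

lemma mul_ST_inr {n : ℕ} {α : Type*} [Fintype α]
    (M : Matrix α (Fin n × Fin n) ℂ) (r : α) (l : LowIdx n) :
    (M * (Matrix.fromRows (selD n) ((Real.sqrt 2 : ℂ) • selL n))ᵀ) r (Sum.inr l) =
      (Real.sqrt 2 : ℂ) * M r l.val := by
  rw [Matrix.mul_apply]
  simp only [Matrix.transpose_apply, Matrix.fromRows_apply_inr, Matrix.smul_apply, selL,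
    smul_eq_mul, mul_ite, mul_one, mul_zero]
  rw [Finset.sum_ite_eq' Finset.univ (l.val : Fin n × Fin n)]
  simp [mul_comm]

lemma Vblock_mul_symProj (n : ℕ) : Vblock n * symProj n = Vblock n := by
  unfold Vblock
  rw [Matrix.mul_assoc, symProj_idem]

lemma Vblock_transpose (n : ℕ) :
    (Vblock n)ᵀ = symProj n * (Matrix.fromRows (selD n) ((Real.sqrt 2 : ℂ) • selL n))ᵀ := by
  unfold Vblock
  rw [Matrix.transpose_mul, symProj_transpose]

lemma VVt (n : ℕ) : Vblock n * (Vblock n)ᵀ = 1 := by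
  have h : Vblock n * (Vblock n)ᵀ =
      Vblock n * (Matrix.fromRows (selD n) ((Real.sqrt 2 : ℂ) • selL n))ᵀ := by
    rw [Vblock_transpose, ← Matrix.mul_assoc, Vblock_mul_symProj]
  rw [h]
  ext a b
  cases a with
  | inl i =>
    cases b with
    | inl j =>
      rw [mul_ST_inl, Vblock_apply_inl, symProj_diag_apply]
      by_cases hij : i = j
      · subst hij; simp [Matrix.one_apply]
      · have : ((j, j) : Fin n × Fin n) ≠ (i, i) := by
          simp [Prod.ext_iff]; intro h'; exact absurd h'.symm hij
        simp [Matrix.one_apply, hij, this]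
    | inr l =>
      rw [mul_ST_inr, Vblock_apply_inl, symProj_diag_apply]
      simp [Matrix.one_apply, lowIdx_val_ne_diag l i]
  | inr k =>
    cases b with
    | inl j =>
      rw [mul_ST_inl, Vblock_apply_inr, symProj_apply]
      have h1 : (k.val : Fin n × Fin n) ≠ (j, j) := lowIdx_val_ne_diag k j
      have h2 : ((j, j) : Fin n × Fin n) ≠ (k.val.2, k.val.1) := by
        intro h
        have := k.property
        rw [Prod.ext_iff] at h
        simp at h
        rw [← h.1, ← h.2] at this
        exact lt_irrefl _ this
      simp [Matrix.one_apply, h1, h2]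
    | inr l =>
      rw [mul_ST_inr, Vblock_apply_inr, symProj_apply]
      have h2 : (l.val : Fin n × Fin n) ≠ (k.val.2, k.val.1) := lowIdx_swap_ne k l.val l.property
      by_cases hkl : k = l
      · subst hkl
        simp only [Matrix.one_apply_eq]
        simp [h2]
        calc (Real.sqrt 2 : ℂ) * ((Real.sqrt 2 : ℂ) * 2⁻¹)
            = ((Real.sqrt 2 : ℂ) * (Real.sqrt 2 : ℂ)) * 2⁻¹ := by ring
          _ = 1 := by rw [sqrt2_mul_self]; norm_num
      · have h1 : (k.val : Fin n × Fin n) ≠ l.val := by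
          intro h; exact hkl (Subtype.ext h)
        have : (Sum.inr k : Fin n ⊕ LowIdx n) ≠ Sum.inr l := by simp [hkl]
        simp [Matrix.one_apply, h1, h2, this]

lemma VtV (n : ℕ) : (Vblock n)ᵀ * Vblock n = symProj n := by
  ext p q
  rw [Matrix.mul_apply]
  simp only [Matrix.transpose_apply]
  rw [Fintype.sum_sum_type]
  simp only [Vblock_apply_inl, Vblock_apply_inr, symProj_diag_apply]
  have h1 : (∑ i : Fin n, (if p = (i,i) then (1:ℂ) else 0) * (if q = (i,i) then 1 else 0))
      = (if p = (p.1,p.1) then (1:ℂ) else 0) * (if q = (p.1,p.1) then 1 else 0) := by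
    apply Fintype.sum_eq_single
    intro i hi
    by_cases h : p = (i,i)
    · subst h; simp at hi
    · simp [h]
  rw [h1, symProj_apply]
  rcases lt_trichotomy p.1 p.2 with hlt | heq | hgt
  · have hpd : p ≠ (p.1, p.1) := by
      intro h
      have h2 := congrArg Prod.snd h
      simp at h2
      rw [h2] at hlt
      exact lt_irrefl _ hlt
    rw [if_neg hpd]
    have h2 : (∑ k : LowIdx n,
        ((Real.sqrt 2 : ℂ) * symProj n k.val p) * ((Real.sqrt 2 : ℂ) * symProj n k.val q))
        = ((Real.sqrt 2 : ℂ) * symProj n p p) * ((Real.sqrt 2 : ℂ) * symProj n p q) := by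
      apply Fintype.sum_eq_single (⟨p, hlt⟩ : LowIdx n)
      intro k hk
      have hk1 : (k.val : Fin n × Fin n) ≠ p := fun h => hk (Subtype.ext h)
      have hk2 : p ≠ (k.val.2, k.val.1) := lowIdx_swap_ne k p hlt
      simp [symProj_apply, hk1, hk2]
    rw [h2]
    have hpp : symProj n p p = 2⁻¹ := by
      have c1 : p ≠ (p.2, p.1) := by
        intro h
        have h2 := congrArg Prod.fst h
        simp at h2
        rw [h2] at hlt
        exact lt_irrefl _ hlt
      simp [symProj_apply, c1]
    rw [hpp, symProj_apply]
    set X := (if p = q then (1:ℂ) else 0) + (if q = (p.2,p.1) then 1 else 0) with hX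
    linear_combination ((2:ℂ)⁻¹ * 2⁻¹ * X) * sqrt2_mul_self
  · have hpd : p = (p.1, p.1) := by
      rw [Prod.ext_iff]; exact ⟨rfl, heq.symm⟩
    have h2 : (∑ k : LowIdx n,
        ((Real.sqrt 2 : ℂ) * symProj n k.val p) * ((Real.sqrt 2 : ℂ) * symProj n k.val q)) = 0 := by
      apply Finset.sum_eq_zero
      intro k _
      have hk1 : (k.val : Fin n × Fin n) ≠ p := by
        intro h
        have := k.property
        rw [h] at this
        rw [heq] at this
        exact lt_irrefl _ this
      have hk2 : p ≠ (k.val.2, k.val.1) := by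
        intro h
        simp [Prod.ext_iff] at h
        have h3 := k.property
        rw [← h.2, ← h.1] at h3
        rw [heq] at h3
        exact lt_irrefl _ h3
      simp [symProj_apply, hk1, hk2]
    rw [h2, if_pos hpd, one_mul, add_zero]
    have hswap : ((p.2, p.1) : Fin n × Fin n) = p := by
      rw [Prod.ext_iff]; exact ⟨heq.symm, heq⟩
    rw [← hpd, hswap]
    by_cases hq : q = p
    · simp [hq]; norm_num
    · have hq2 : p ≠ q := fun h => hq h.symm
      simp [hq, hq2]
  · have hpd : p ≠ (p.1, p.1) := by
      intro h
      have h2 := congrArg Prod.snd h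
      simp at h2
      rw [h2] at hgt
      exact lt_irrefl _ hgt
    rw [if_neg hpd]
    have h2 : (∑ k : LowIdx n,
        ((Real.sqrt 2 : ℂ) * symProj n k.val p) * ((Real.sqrt 2 : ℂ) * symProj n k.val q))
        = ((Real.sqrt 2 : ℂ) * symProj n (p.2, p.1) p) * ((Real.sqrt 2 : ℂ) * symProj n (p.2, p.1) q) := by
      apply Fintype.sum_eq_single (⟨(p.2, p.1), hgt⟩ : LowIdx n)
      intro k hk
      have hk1 : (k.val : Fin n × Fin n) ≠ p := by
        intro h
        have := k.property
        rw [h] at this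
        exact lt_asymm hgt this
      have hk2 : p ≠ (k.val.2, k.val.1) := by
        intro h
        rw [Prod.ext_iff] at h
        exact hk (Subtype.ext (by rw [Prod.ext_iff]; exact ⟨h.2.symm, h.1.symm⟩))
      simp [symProj_apply, hk1, hk2]
    rw [h2]
    have e1 : symProj n (p.2, p.1) p = 2⁻¹ := by
      have c1 : ((p.2, p.1) : Fin n × Fin n) ≠ p := by
        intro h
        have h2 := congrArg Prod.fst h
        simp at h2
        rw [h2] at hgt
        exact lt_irrefl _ hgt
      simp [symProj_apply, c1]
    have e2 : symProj n (p.2, p.1) q =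
        2⁻¹ * ((if q = (p.2, p.1) then (1:ℂ) else 0) + (if p = q then 1 else 0)) := by
      rw [symProj_apply]
      have c3 : (q = (((p.2,p.1) : Fin n × Fin n).2, ((p.2,p.1) : Fin n × Fin n).1)) ↔ p = q := by
        constructor
        · intro h; rw [h]
        · intro h; rw [← h]
      have c4 : ((((p.2,p.1) : Fin n × Fin n)) = q) ↔ q = (p.2,p.1) := eq_comm
      rw [if_congr c3 rfl rfl, if_congr c4 rfl rfl, add_comm]
    rw [e1, e2]
    set X := (if p = q then (1:ℂ) else 0) + (if q = (p.2,p.1) then 1 else 0) with hX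
    linear_combination ((2:ℂ)⁻¹ * 2⁻¹ * X) * sqrt2_mul_self

lemma Ublock_apply {m : ℕ} (k : LowIdx m) (p : Fin m × Fin m) :
    Ublock m k p = -(Real.sqrt 2 : ℂ) * skewProj m (k.val.2, k.val.1) p := by
  unfold Ublock
  simp only [Matrix.smul_apply, smul_eq_mul]
  congr 1
  rw [Matrix.mul_apply]
  simp only [selU, ite_mul, one_mul, zero_mul]
  rw [Finset.sum_ite_eq' Finset.univ ((k.val.2, k.val.1) : Fin m × Fin m)]
  simp

lemma UtU (m : ℕ) : (Ublock m)ᵀ * Ublock m = skewProj m := by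
  ext p q
  rw [Matrix.mul_apply]
  simp only [Matrix.transpose_apply, Ublock_apply]
  rcases lt_trichotomy p.1 p.2 with hlt | heq | hgt
  · have h2 : (∑ k : LowIdx m,
        (-(Real.sqrt 2 : ℂ) * skewProj m (k.val.2, k.val.1) p) *
        (-(Real.sqrt 2 : ℂ) * skewProj m (k.val.2, k.val.1) q))
        = (-(Real.sqrt 2 : ℂ) * skewProj m (p.2, p.1) p) *
          (-(Real.sqrt 2 : ℂ) * skewProj m (p.2, p.1) q) := by
      apply Fintype.sum_eq_single (⟨p, hlt⟩ : LowIdx m)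
      intro k hk
      have c1 : ((k.val.2, k.val.1) : Fin m × Fin m) ≠ p := Ne.symm (lowIdx_swap_ne k p hlt)
      have c2 : p ≠ (k.val : Fin m × Fin m) := fun h => hk (Subtype.ext h.symm)
      simp [skewProj_apply, c1, c2, Prod.mk.eta]
    rw [h2]
    have e1 : skewProj m (p.2, p.1) p = -2⁻¹ := by
      have c1 : ((p.2, p.1) : Fin m × Fin m) ≠ p := by
        intro h
        have h2 := congrArg Prod.fst h
        simp at h2
        rw [h2] at hlt
        exact lt_irrefl _ hlt
      simp [skewProj_apply, c1, Prod.mk.eta]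
    have e2 : skewProj m (p.2, p.1) q =
        2⁻¹ * ((if q = (p.2, p.1) then (1:ℂ) else 0) - (if p = q then 1 else 0)) := by
      rw [skewProj_apply]
      have c3 : (q = (((p.2,p.1) : Fin m × Fin m).2, ((p.2,p.1) : Fin m × Fin m).1)) ↔ p = q := by
        constructor
        · intro h; rw [h]
        · intro h; rw [← h]
      have c4 : ((((p.2,p.1) : Fin m × Fin m)) = q) ↔ q = (p.2,p.1) := eq_comm
      rw [if_congr c3 rfl rfl, if_congr c4 rfl rfl]
    rw [e1, e2, skewProj_apply]
    set a := (if p = q then (1:ℂ) else 0) with ha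
    set b := (if q = (p.2,p.1) then (1:ℂ) else 0) with hb
    linear_combination ((2:ℂ)⁻¹ * 2⁻¹ * (a - b)) * sqrt2_mul_self
  · have h2 : (∑ k : LowIdx m,
        (-(Real.sqrt 2 : ℂ) * skewProj m (k.val.2, k.val.1) p) *
        (-(Real.sqrt 2 : ℂ) * skewProj m (k.val.2, k.val.1) q)) = 0 := by
      apply Finset.sum_eq_zero
      intro k _
      have c1 : ((k.val.2, k.val.1) : Fin m × Fin m) ≠ p := by
        intro h
        simp [Prod.ext_iff] at h
        have h3 := k.property
        rw [h.1, h.2] at h3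
        rw [heq] at h3
        exact lt_irrefl _ h3
      have c2 : p ≠ (k.val : Fin m × Fin m) := by
        intro h
        have := k.property
        rw [← h] at this
        rw [heq] at this
        exact lt_irrefl _ this
      simp [skewProj_apply, c1, c2, Prod.mk.eta]
    rw [h2, skewProj_apply]
    have hswap : ((p.2, p.1) : Fin m × Fin m) = p := by
      rw [Prod.ext_iff]; exact ⟨heq.symm, heq⟩
    rw [hswap]
    by_cases hq : p = q
    · subst hq; simp
    · have hq2 : q ≠ p := fun h => hq h.symm
      simp [hq, hq2]
  · have h2 : (∑ k : LowIdx m,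
        (-(Real.sqrt 2 : ℂ) * skewProj m (k.val.2, k.val.1) p) *
        (-(Real.sqrt 2 : ℂ) * skewProj m (k.val.2, k.val.1) q))
        = (-(Real.sqrt 2 : ℂ) * skewProj m p p) *
          (-(Real.sqrt 2 : ℂ) * skewProj m p q) := by
      have hval : ((((⟨(p.2, p.1), hgt⟩ : LowIdx m)).val.2,
          ((⟨(p.2, p.1), hgt⟩ : LowIdx m)).val.1) : Fin m × Fin m) = p := Prod.mk.eta
      have := Fintype.sum_eq_single (f := fun k : LowIdx m =>
        (-(Real.sqrt 2 : ℂ) * skewProj m (k.val.2, k.val.1) p) *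
        (-(Real.sqrt 2 : ℂ) * skewProj m (k.val.2, k.val.1) q))
        (⟨(p.2, p.1), hgt⟩ : LowIdx m) ?_
      · rw [this, hval]
      · intro k hk
        have c1 : ((k.val.2, k.val.1) : Fin m × Fin m) ≠ p := by
          intro h
          have h' : p = ((k.val.2, k.val.1) : Fin m × Fin m) := h.symm
          rw [Prod.ext_iff] at h'
          apply hk
          apply Subtype.ext
          show (k.val : Fin m × Fin m) = ((p.2, p.1) : Fin m × Fin m)
          rw [Prod.ext_iff]
          exact ⟨h'.2.symm, h'.1.symm⟩
        have c2 : p ≠ (k.val : Fin m × Fin m) := by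
          intro h
          have := k.property
          rw [← h] at this
          exact lt_asymm hgt this
        simp [skewProj_apply, c1, c2, Prod.mk.eta]
    rw [h2]
    have e1 : skewProj m p p = 2⁻¹ := by
      have c1 : p ≠ ((p.2, p.1) : Fin m × Fin m) := by
        intro h
        have h2 := congrArg Prod.fst h
        simp at h2
        rw [h2] at hgt
        exact lt_irrefl _ hgt
      simp [skewProj_apply, c1]
    rw [e1, skewProj_apply]
    set a := (if p = q then (1:ℂ) else 0) with ha
    set b := (if q = (p.2,p.1) then (1:ℂ) else 0) with hb
    linear_combination ((2:ℂ)⁻¹ * 2⁻¹ * (a - b)) * sqrt2_mul_self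


open Kronecker

lemma mul_commMat_apply {n : ℕ} {α : Type*} [Fintype α]
    (M : Matrix α (Fin n × Fin n) ℂ) (p : α) (q : Fin n × Fin n) :
    (M * commMat n) p q = M p (q.2, q.1) := by
  rw [Matrix.mul_apply]
  simp only [commMat, mul_ite, mul_one, mul_zero]
  have h : ∀ r : Fin n × Fin n, (if q = (r.2, r.1) then M p r else 0)
      = if r = (q.2, q.1) then M p r else 0 := by
    intro r
    exact if_congr ⟨fun h => by rw [h], fun h => by rw [h]⟩ rfl rfl
  simp_rw [h]
  rw [Finset.sum_ite_eq' Finset.univ ((q.2, q.1) : Fin n × Fin n)]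
  simp

lemma commMat_mul_apply {n : ℕ} {α : Type*} [Fintype α]
    (M : Matrix (Fin n × Fin n) α ℂ) (p : Fin n × Fin n) (q : α) :
    (commMat n * M) p q = M (p.2, p.1) q := by
  rw [Matrix.mul_apply]
  simp only [commMat, ite_mul, one_mul, zero_mul]
  rw [Finset.sum_ite_eq' Finset.univ ((p.2, p.1) : Fin n × Fin n)]
  simp

lemma delta_commMat {m n : ℕ} (A B : Matrix (Fin m) (Fin n) ℂ) :
    (A ⊗ₖ B - B ⊗ₖ A) * commMat n = -(commMat m * (A ⊗ₖ B - B ⊗ₖ A)) := by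
  ext p q
  rw [Matrix.neg_apply, mul_commMat_apply, commMat_mul_apply]
  simp only [Matrix.sub_apply, Matrix.kroneckerMap_apply]
  ring

lemma delta_symProj {m n : ℕ} (A B : Matrix (Fin m) (Fin n) ℂ) :
    (A ⊗ₖ B - B ⊗ₖ A) * symProj n = skewProj m * (A ⊗ₖ B - B ⊗ₖ A) := by
  unfold symProj skewProj
  rw [Matrix.mul_smul, Matrix.smul_mul]
  congr 1
  rw [Matrix.mul_add, Matrix.mul_one, delta_commMat, Matrix.sub_mul, Matrix.one_mul]
  exact (sub_eq_add_neg _ _).symm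

lemma symProj_mulVec_kron {n : ℕ} (x : Fin n → ℂ) :
    (symProj n).mulVec (kronVec x x) = kronVec x x := by
  unfold symProj
  rw [Matrix.smul_mulVec, Matrix.add_mulVec, Matrix.one_mulVec, commMat_mulVec]
  funext p
  simp only [Pi.smul_apply, Pi.add_apply, kronVec, smul_eq_mul]
  ring

lemma L1 {m n : ℕ} (A B : Matrix (Fin m) (Fin n) ℂ) :
    (Ublock m)ᵀ * (Ublock m * (A ⊗ₖ B - B ⊗ₖ A) * (Vblock n)ᵀ) =
      (A ⊗ₖ B - B ⊗ₖ A) * (Vblock n)ᵀ := by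
  have hDV : (A ⊗ₖ B - B ⊗ₖ A) * (Vblock n)ᵀ =
      skewProj m * ((A ⊗ₖ B - B ⊗ₖ A) * (Vblock n)ᵀ) := by
    rw [Vblock_transpose]
    rw [← Matrix.mul_assoc (A ⊗ₖ B - B ⊗ₖ A) (symProj n)]
    rw [delta_symProj]
    rw [← Matrix.mul_assoc, ← Matrix.mul_assoc, skewProj_idem]
  calc (Ublock m)ᵀ * (Ublock m * (A ⊗ₖ B - B ⊗ₖ A) * (Vblock n)ᵀ)
      = (Ublock m)ᵀ * (Ublock m * ((A ⊗ₖ B - B ⊗ₖ A) * (Vblock n)ᵀ)) := by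
        rw [Matrix.mul_assoc]
    _ = ((Ublock m)ᵀ * Ublock m) * ((A ⊗ₖ B - B ⊗ₖ A) * (Vblock n)ᵀ) := by
        rw [← Matrix.mul_assoc]
    _ = skewProj m * ((A ⊗ₖ B - B ⊗ₖ A) * (Vblock n)ᵀ) := by rw [UtU]
    _ = (A ⊗ₖ B - B ⊗ₖ A) * (Vblock n)ᵀ := hDV.symm

lemma mulVec_inj_iff {α β : Type*} [Fintype β] [Fintype α] [DecidableEq β]
    (M : Matrix α β ℂ) : Function.Injective M.mulVec ↔ ∀ v, M.mulVec v = 0 → v = 0 := by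
  constructor
  · intro h v hv
    apply h
    simpa [Matrix.mulVec_zero] using hv
  · intro h u v huv
    have : M.mulVec (u - v) = 0 := by
      rw [Matrix.mulVec_sub, huv, sub_self]
    have := h _ this
    exact sub_eq_zero.mp this

lemma transpose_surjective {m n : ℕ} (B : Matrix (Fin m) (Fin n) ℂ)
    (hB : Function.Injective B.mulVec) : Function.Surjective Bᵀ.mulVec := by
  have hinj : Function.Injective B.mulVecLin := by
    exact hB
  have h1 : B.rank = n := by
    rw [Matrix.rank, LinearMap.finrank_range_of_inj hinj]
    simp
  have h2 : Bᵀ.rank = n := by rw [Matrix.rank_transpose]; exact h1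
  have h3 : LinearMap.range Bᵀ.mulVecLin = ⊤ := by
    apply Submodule.eq_top_of_finrank_eq
    rw [← Matrix.rank] at *
    simpa using h2
  have := LinearMap.range_eq_top.mp h3
  exact this

/-- Core lemma: if `B` and every `A - λB` are injective, the Sylvester-like relation forces `Z = 0`. -/
lemma core_lemma {m n : ℕ} (A B : Matrix (Fin m) (Fin n) ℂ) (Z : Matrix (Fin n) (Fin n) ℂ)
    (hrel : A * Z * Bᵀ = B * Z * Aᵀ)
    (hinj : ∀ lam : ℂ, Function.Injective (A - lam • B).mulVec)
    (hB : Function.Injective B.mulVec) : Z = 0 := by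
  classical
  set K : Submodule ℂ (Fin n → ℂ) :=
    LinearMap.ker Z.mulVecLin ⊓ LinearMap.ker Zᵀ.mulVecLin with hK
  -- key equivalence for any A' satisfying the relation and injectivity
  have key : ∀ A' : Matrix (Fin m) (Fin n) ℂ, A' * Z * Bᵀ = B * Z * A'ᵀ →
      Function.Injective A'.mulVec →
      ∀ φ : Fin m → ℂ, Bᵀ.mulVec φ ∈ K ↔ A'ᵀ.mulVec φ ∈ K := by
    intro A' hrel' hA' φ
    have hrelT : B * Zᵀ * A'ᵀ = A' * Zᵀ * Bᵀ := by
      have := congrArg Matrix.transpose hrel'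
      simpa [Matrix.transpose_mul, Matrix.mul_assoc] using this
    have hBv := (mulVec_inj_iff B).mp hB
    have hAv := (mulVec_inj_iff A').mp hA'
    simp only [hK, Submodule.mem_inf, LinearMap.mem_ker, Matrix.mulVecLin_apply]
    constructor
    · rintro ⟨h1, h2⟩
      constructor
      · -- Z *ᵥ A'ᵀ *ᵥ φ = 0, using M1 : A' Z Bᵀ = B Z A'ᵀ and B inj
        apply hBv
        rw [Matrix.mulVec_mulVec, Matrix.mulVec_mulVec, ← hrel',
          ← Matrix.mulVec_mulVec, ← Matrix.mulVec_mulVec, h1, Matrix.mulVec_zero]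
      · -- Zᵀ *ᵥ A'ᵀ *ᵥ φ = 0, using M2
        apply hBv
        rw [Matrix.mulVec_mulVec, Matrix.mulVec_mulVec, hrelT,
          ← Matrix.mulVec_mulVec, ← Matrix.mulVec_mulVec, h2, Matrix.mulVec_zero]
    · rintro ⟨h1, h2⟩
      constructor
      · apply hAv
        rw [Matrix.mulVec_mulVec, Matrix.mulVec_mulVec, hrel',
          ← Matrix.mulVec_mulVec, ← Matrix.mulVec_mulVec, h1, Matrix.mulVec_zero]
      · apply hAv
        rw [Matrix.mulVec_mulVec, Matrix.mulVec_mulVec, ← hrelT,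
          ← Matrix.mulVec_mulVec, ← Matrix.mulVec_mulVec, h2, Matrix.mulVec_zero]
  have hA0 : Function.Injective A.mulVec := by
    have := hinj 0
    simpa using this
  -- show K = ⊤
  have hKtop : K = ⊤ := by
    by_contra hKt
    have hlt : K < ⊤ := lt_top_iff_ne_top.mpr hKt
    haveI : Nontrivial ((Fin n → ℂ) ⧸ K) := Submodule.Quotient.nontrivial_iff.mpr hlt.ne
    set abar : (Fin m → ℂ) →ₗ[ℂ] ((Fin n → ℂ) ⧸ K) := K.mkQ.comp Aᵀ.mulVecLin with habar
    set bbar : (Fin m → ℂ) →ₗ[ℂ] ((Fin n → ℂ) ⧸ K) := K.mkQ.comp Bᵀ.mulVecLin with hbbar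
    have hkera : LinearMap.ker bbar ≤ LinearMap.ker abar := by
      intro φ hφ
      simp only [habar, hbbar, LinearMap.mem_ker, LinearMap.comp_apply,
        Submodule.mkQ_apply, Submodule.Quotient.mk_eq_zero, Matrix.mulVecLin_apply] at *
      exact (key A hrel hA0 φ).mp hφ
    have hbsurj : Function.Surjective bbar := by
      have h1 := transpose_surjective B hB
      intro w
      obtain ⟨w', hw'⟩ := K.mkQ_surjective w
      obtain ⟨φ, hφ⟩ := h1 w'
      refine ⟨φ, ?_⟩
      show K.mkQ (Bᵀ.mulVecLin φ) = w
      rw [Matrix.mulVecLin_apply, hφ, hw']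
    let e := bbar.quotKerEquivOfSurjective hbsurj
    let abar' := (LinearMap.ker bbar).liftQ abar hkera
    let T : Module.End ℂ ((Fin n → ℂ) ⧸ K) := abar' ∘ₗ (e.symm : _ →ₗ[ℂ] _)
    obtain ⟨lam, hlam⟩ := Module.End.exists_eigenvalue T
    obtain ⟨v, hv⟩ := hlam.exists_hasEigenvector
    obtain ⟨φ, hφ⟩ := hbsurj v
    have heq : T v = abar φ := by
      have h1 : e (Submodule.Quotient.mk φ) = bbar φ := rfl
      have h2 : e.symm v = Submodule.Quotient.mk φ := by
        rw [← hφ, ← h1, LinearEquiv.symm_apply_apply]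
      show abar' (e.symm v) = abar φ
      rw [h2]
      rfl
    have heig : abar φ = lam • bbar φ := by
      rw [← heq, hv.apply_eq_smul, hφ]
    -- so (Aᵀ - lam • Bᵀ) *ᵥ φ ∈ K
    have hmem : (A - lam • B)ᵀ.mulVec φ ∈ K := by
      have : K.mkQ ((A - lam • B)ᵀ.mulVec φ) = 0 := by
        have hexp : (A - lam • B)ᵀ.mulVec φ = Aᵀ.mulVec φ - lam • Bᵀ.mulVec φ := by
          rw [Matrix.transpose_sub, Matrix.transpose_smul, Matrix.sub_mulVec,
            Matrix.smul_mulVec]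
        rw [hexp, map_sub, LinearMap.map_smul]
        have ha : K.mkQ (Aᵀ.mulVec φ) = abar φ := rfl
        have hb : K.mkQ (Bᵀ.mulVec φ) = bbar φ := rfl
        rw [ha, hb, heig, sub_self]
      simpa [Submodule.Quotient.mk_eq_zero] using this
    -- relation for A - lam • B
    have hrel2 : (A - lam • B) * Z * Bᵀ = B * Z * (A - lam • B)ᵀ := by
      rw [Matrix.transpose_sub, Matrix.transpose_smul]
      rw [Matrix.sub_mul, Matrix.sub_mul, Matrix.mul_sub]
      rw [hrel]
      congr 1
      simp [Matrix.smul_mul, Matrix.mul_smul]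
    have hBφ : Bᵀ.mulVec φ ∈ K := (key _ hrel2 (hinj lam) φ).mpr hmem
    have : bbar φ = 0 := by
      simp only [hbbar, LinearMap.comp_apply, Submodule.mkQ_apply,
        Submodule.Quotient.mk_eq_zero, Matrix.mulVecLin_apply]
      exact hBφ
    rw [hφ] at this
    exact hv.right this
  -- K = ⊤ gives Z = 0
  have hz : ∀ v, Z.mulVec v = 0 := by
    intro v
    have : v ∈ K := hKtop ▸ Submodule.mem_top
    simp only [hK, Submodule.mem_inf, LinearMap.mem_ker, Matrix.mulVecLin_apply] at this
    exact this.1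
  ext i j
  have := congrFun (hz (Pi.single j 1)) i
  simpa [Matrix.mulVec_single] using this


lemma kron_mulVec {m n : ℕ} (A B : Matrix (Fin m) (Fin n) ℂ) (x y : Fin n → ℂ) :
    (A ⊗ₖ B).mulVec (kronVec x y) = kronVec (A.mulVec x) (B.mulVec y) := by
  funext ⟨i, j⟩
  simp only [Matrix.mulVec, dotProduct, kronVec, Matrix.kroneckerMap_apply,
    Fintype.sum_prod_type, Finset.sum_mul, Finset.mul_sum]
  rw [Finset.sum_comm]
  apply Finset.sum_congr rfl
  intro k _
  apply Finset.sum_congr rfl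
  intro l _
  ring

lemma kron_mulVec_entry {m n : ℕ} (A B : Matrix (Fin m) (Fin n) ℂ)
    (z : Fin n × Fin n → ℂ) (i j : Fin m) :
    ((A ⊗ₖ B).mulVec z) (i, j) = (A * (Matrix.of fun k l => z (k, l)) * Bᵀ) i j := by
  simp only [Matrix.mulVec, dotProduct, Matrix.kroneckerMap_apply, Fintype.sum_prod_type,
    Matrix.mul_apply, Matrix.transpose_apply, Matrix.of_apply, Finset.sum_mul, Finset.mul_sum]
  rw [Finset.sum_comm]
  apply Finset.sum_congr rfl
  intro k _
  apply Finset.sum_congr rfl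
  intro l _
  ring

lemma key_lemma {m n : ℕ} (A B : Matrix (Fin m) (Fin n) ℂ) (z : Fin n × Fin n → ℂ)
    (hz : (A ⊗ₖ B - B ⊗ₖ A).mulVec z = 0) (hz0 : z ≠ 0) :
    ∃ x : Fin n → ℂ, x ≠ 0 ∧ (A ⊗ₖ B - B ⊗ₖ A).mulVec (kronVec x x) = 0 := by
  by_contra hcon
  push_neg at hcon
  have hxz : ∀ x : Fin n → ℂ, (A ⊗ₖ B - B ⊗ₖ A).mulVec (kronVec x x) = 0 → x = 0 := by
    intro x hx
    by_contra hx0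
    exact hcon x hx0 hx
  have hdel : ∀ x : Fin n → ℂ, (A ⊗ₖ B - B ⊗ₖ A).mulVec (kronVec x x) =
      kronVec (A.mulVec x) (B.mulVec x) - kronVec (B.mulVec x) (A.mulVec x) := by
    intro x
    rw [Matrix.sub_mulVec, kron_mulVec, kron_mulVec]
  have hB : Function.Injective B.mulVec := by
    rw [mulVec_inj_iff]
    intro v hv
    apply hxz
    rw [hdel, hv]
    funext p
    simp [kronVec]
  have hinj : ∀ lam : ℂ, Function.Injective (A - lam • B).mulVec := by
    intro lam
    rw [mulVec_inj_iff]
    intro v hv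
    have hAv : A.mulVec v = lam • B.mulVec v := by
      rw [Matrix.sub_mulVec, Matrix.smul_mulVec] at hv
      exact sub_eq_zero.mp hv
    apply hxz
    rw [hdel, hAv]
    funext p
    simp only [kronVec, Pi.sub_apply, Pi.smul_apply, smul_eq_mul, Pi.zero_apply]
    ring
  set Z : Matrix (Fin n) (Fin n) ℂ := Matrix.of fun k l => z (k, l) with hZdef
  have hrel : A * Z * Bᵀ = B * Z * Aᵀ := by
    have h : ∀ i j : Fin m, ((A ⊗ₖ B - B ⊗ₖ A).mulVec z) (i, j) =
        (A * Z * Bᵀ) i j - (B * Z * Aᵀ) i j := by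
      intro i j
      rw [Matrix.sub_mulVec]
      show ((A ⊗ₖ B).mulVec z) (i,j) - ((B ⊗ₖ A).mulVec z) (i,j) = _
      rw [kron_mulVec_entry, kron_mulVec_entry]
    ext i j
    have := h i j
    rw [hz] at this
    simp only [Pi.zero_apply] at this
    exact sub_eq_zero.mp this.symm
  have hZ0 : Z = 0 := core_lemma A B Z hrel hinj hB
  apply hz0
  funext p
  have : Z p.1 p.2 = 0 := by rw [hZ0]; rfl
  simpa [hZdef] using this

theorem stmt_19 {m n : ℕ} (A B : Matrix (Fin m) (Fin n) ℂ) :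
    (Function.Injective (A ⊗ₖ B - B ⊗ₖ A).mulVec ↔
      Function.Injective (Ublock m * (A ⊗ₖ B - B ⊗ₖ A) * (Vblock n)ᵀ).mulVec) ∧
    ((∃ y : Fin n ⊕ LowIdx n → ℂ, y ≠ 0 ∧
        (Ublock m * (A ⊗ₖ B - B ⊗ₖ A) * (Vblock n)ᵀ).mulVec y = 0) →
      ∃ x : Fin n → ℂ, x ≠ 0 ∧
        (Ublock m * (A ⊗ₖ B - B ⊗ₖ A) * (Vblock n)ᵀ).mulVec
          ((Vblock n).mulVec (kronVec x x)) = 0) := by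
  classical
  have hVVt := VVt n
  have hVtV := VtV n
  have hstep1 : ∀ y : Fin n ⊕ LowIdx n → ℂ,
      (Ublock m * (A ⊗ₖ B - B ⊗ₖ A) * (Vblock n)ᵀ).mulVec y = 0 →
      (A ⊗ₖ B - B ⊗ₖ A).mulVec ((Vblock n)ᵀ.mulVec y) = 0 := by
    intro y hy
    have h0 : ((A ⊗ₖ B - B ⊗ₖ A) * (Vblock n)ᵀ).mulVec y = 0 := by
      rw [← L1 A B, ← Matrix.mulVec_mulVec, hy, Matrix.mulVec_zero]
    rw [Matrix.mulVec_mulVec]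
    exact h0
  have hVty : ∀ y : Fin n ⊕ LowIdx n → ℂ, y ≠ 0 → (Vblock n)ᵀ.mulVec y ≠ 0 := by
    intro y hy0 h
    apply hy0
    have h1 : (Vblock n * (Vblock n)ᵀ).mulVec y = 0 := by
      rw [← Matrix.mulVec_mulVec, h, Matrix.mulVec_zero]
    rwa [hVVt, Matrix.one_mulVec] at h1
  have hkxx : ∀ x : Fin n → ℂ, (A ⊗ₖ B - B ⊗ₖ A).mulVec (kronVec x x) = 0 →
      (Ublock m * (A ⊗ₖ B - B ⊗ₖ A) * (Vblock n)ᵀ).mulVec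
        ((Vblock n).mulVec (kronVec x x)) = 0 := by
    intro x hx
    rw [Matrix.mulVec_mulVec]
    have hass : Ublock m * (A ⊗ₖ B - B ⊗ₖ A) * (Vblock n)ᵀ * Vblock n
        = Ublock m * (A ⊗ₖ B - B ⊗ₖ A) * symProj n := by
      rw [Matrix.mul_assoc (Ublock m * (A ⊗ₖ B - B ⊗ₖ A)), hVtV]
    rw [hass, ← Matrix.mulVec_mulVec, symProj_mulVec_kron, ← Matrix.mulVec_mulVec,
      hx, Matrix.mulVec_zero]
  constructor
  · constructor
    · intro hinj
      rw [mulVec_inj_iff] at hinj ⊢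
      intro y hy
      have h1 := hstep1 y hy
      have h2 := hinj _ h1
      by_contra hy0
      exact hVty y hy0 h2
    · intro hinj
      rw [mulVec_inj_iff] at hinj ⊢
      intro z hz
      by_contra hz0
      obtain ⟨x, hx0, hx⟩ := key_lemma A B z hz hz0
      have h3 := hinj _ (hkxx x hx)
      have h4 : kronVec x x = 0 := by
        have h5 : (Vblock n)ᵀ.mulVec ((Vblock n).mulVec (kronVec x x)) = 0 := by
          rw [h3, Matrix.mulVec_zero]
        rw [Matrix.mulVec_mulVec, hVtV] at h5
        rwa [symProj_mulVec_kron] at h5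
      obtain ⟨i, hi⟩ : ∃ i, x i ≠ 0 := by
        by_contra hxi
        push_neg at hxi
        exact hx0 (funext hxi)
      have h6 := congrFun h4 (i, i)
      simp only [kronVec, Pi.zero_apply] at h6
      exact hi (mul_self_eq_zero.mp h6)
  · rintro ⟨y, hy0, hy⟩
    have h1 := hstep1 y hy
    have h2 : (Vblock n)ᵀ.mulVec y ≠ 0 := hVty y hy0
    obtain ⟨x, hx0, hx⟩ := key_lemma A B _ h1 h2
    exact ⟨x, hx0, hkxx x hx⟩
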